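/- For a, b ∈ ℝ and τ in the upper half-plane, g_{a,b}(-1/τ) = i e^{2πiab} (-iτ)^{3/2} g_{b,-a}(τ), where (-iτ)^{3/2} is taken with the principal branch. -/

import Mathlib

open Complex

/-- The weight 3/2 theta function `g_{a,b}(τ) = ∑_{ν ∈ a + ℤ} ν e^{πiν²τ + 2πiνb}`. -/
noncomputable def thetaG (a b : ℝ) (τ : ℂ) : ℂ :=
  ∑' n : ℤ, ((a : ℂ) + (n : ℂ))
    * Complex.exp ((Real.pi : ℂ) * I * ((a : ℂ) + (n : ℂ)) ^ 2 * τ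
      + 2 * (Real.pi : ℂ) * I * ((a : ℂ) + (n : ℂ)) * (b : ℂ))

open Real in
/-- Expression of `thetaG` in terms of `jacobiTheta₂` and `jacobiTheta₂'`. -/
lemma thetaG_eq_aux (a b : ℝ) {τ : ℂ} (hτ : 0 < τ.im) :
    (∑' n : ℤ, ((a : ℂ) + (n : ℂ))
      * Complex.exp ((Real.pi : ℂ) * I * ((a : ℂ) + (n : ℂ)) ^ 2 * τ
        + 2 * (Real.pi : ℂ) * I * ((a : ℂ) + (n : ℂ)) * (b : ℂ)))
    = Complex.exp ((Real.pi : ℂ) * I * (a : ℂ) ^ 2 * τ + 2 * (Real.pi : ℂ) * I * a * b) *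
      ((a : ℂ) * jacobiTheta₂ ((a : ℂ) * τ + b) τ
        + jacobiTheta₂' ((a : ℂ) * τ + b) τ / (2 * (Real.pi : ℂ) * I)) := by
  have h1 := hasSum_jacobiTheta₂_term ((a : ℂ) * τ + b) hτ
  have h2 := hasSum_jacobiTheta₂'_term ((a : ℂ) * τ + b) hτ
  have h3 := ((h1.mul_left (a : ℂ)).add (h2.div_const (2 * (Real.pi : ℂ) * I))).mul_left
    (Complex.exp ((Real.pi : ℂ) * I * (a : ℂ) ^ 2 * τ + 2 * (Real.pi : ℂ) * I * a * b))
  refine HasSum.tsum_eq ?_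
  convert h3 using 2 with n
  case e'_3 => rfl
  simp only [jacobiTheta₂'_term, jacobiTheta₂_term]
  have hd : ∀ x : ℂ, 2 * (π : ℂ) * I * (n : ℂ) * x / (2 * (π : ℂ) * I) = n * x := by
    intro x
    rw [mul_comm (2 * (π : ℂ) * I) (n : ℂ), mul_assoc, mul_div_assoc,
      mul_div_cancel_left₀ _ two_pi_I_ne_zero]
  rw [hd, ← add_mul, mul_comm (cexp _) (_ * cexp _), mul_assoc ((a:ℂ)+(n:ℂ)), ← Complex.exp_add]
  congr 2
  ring

open Real in
theorem thetaG_S_transform_aux (a b : ℝ) (τ : ℂ) (hτ : 0 < τ.im) :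
    (∑' n : ℤ, ((a : ℂ) + (n : ℂ))
    * Complex.exp ((Real.pi : ℂ) * I * ((a : ℂ) + (n : ℂ)) ^ 2 * (-1/τ)
      + 2 * (Real.pi : ℂ) * I * ((a : ℂ) + (n : ℂ)) * (b : ℂ)))
      = I * Complex.exp (2 * (Real.pi : ℂ) * I * (a : ℂ) * (b : ℂ))
        * (-I * τ) ^ (3 / 2 : ℂ) *
    (∑' n : ℤ, ((b : ℂ) + (n : ℂ))
    * Complex.exp ((Real.pi : ℂ) * I * ((b : ℂ) + (n : ℂ)) ^ 2 * τ
      + 2 * (Real.pi : ℂ) * I * ((b : ℂ) + (n : ℂ)) * ((-a : ℝ) : ℂ))) := by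
  have h0 : τ ≠ 0 := fun h ↦ lt_irrefl 0 (by simpa [h] using hτ)
  have hτ' : 0 < (-1 / τ).im := by
    rw [div_eq_mul_inv, neg_one_mul, neg_im, inv_im, neg_div, neg_neg]
    exact div_pos hτ (normSq_pos.mpr h0)
  rw [thetaG_eq_aux a b hτ', thetaG_eq_aux b (-a) hτ]
  have hbase : -I * τ ≠ 0 := mul_ne_zero (neg_ne_zero.mpr I_ne_zero) h0
  have hr : (-I * τ) ^ (1 / 2 : ℂ) ≠ 0 := by
    simp [cpow_eq_zero_iff, hbase, h0, I_ne_zero]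
  have h32 : (-I * τ) ^ (3 / 2 : ℂ) = (-I * τ) ^ (1 / 2 : ℂ) * (-I * τ) := by
    rw [show (3 / 2 : ℂ) = 1 / 2 + 1 by norm_num, cpow_add _ _ hbase, cpow_one]
  have hz : (b : ℂ) * τ + ((-a : ℝ) : ℂ) = (b : ℂ) * τ - a := by push_cast; ring
  rw [hz, jacobiTheta₂_functional_equation ((b : ℂ) * τ - a) τ,
    jacobiTheta₂'_functional_equation ((b : ℂ) * τ - a) τ,
    show ((b : ℂ) * τ - a) / τ = (a : ℂ) * (-1 / τ) + b by field_simp [h0]; ring]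
  set Θ := jacobiTheta₂ ((a : ℂ) * (-1 / τ) + b) (-1 / τ) with hΘ
  set Θ' := jacobiTheta₂' ((a : ℂ) * (-1 / τ) + b) (-1 / τ) with hΘ'
  have hexp : Complex.exp (2 * (π : ℂ) * I * a * b)
      * Complex.exp ((π : ℂ) * I * (b : ℂ) ^ 2 * τ + 2 * (π : ℂ) * I * b * ((-a : ℝ) : ℂ))
      * Complex.exp (-(π : ℂ) * I * ((b : ℂ) * τ - a) ^ 2 / τ)
      = Complex.exp ((π : ℂ) * I * (a : ℂ) ^ 2 * (-1 / τ) + 2 * (π : ℂ) * I * a * b) := by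
    rw [← Complex.exp_add, ← Complex.exp_add]
    congr 1
    push_cast
    field_simp
    ring
  rw [← hexp, h32]
  set r := (-I * τ) ^ (1 / 2 : ℂ) with hrdef
  field_simp [two_pi_I_ne_zero, hr, I_ne_zero]
  ring_nf
  simp only [show (I : ℂ) ^ 3 = -I by simp [pow_succ, I_sq], I_pow_four, I_sq]
  ring_nf

/-- `g_{a,b}(-1/τ) = i e^{2πiab} (-iτ)^{3/2} g_{b,-a}(τ)` (principal branch). -/
theorem thetaG_S_transform (a b : ℝ) (τ : ℂ) (hτ : 0 < τ.im) :
    thetaG a b (-1 / τ)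
      = I * Complex.exp (2 * (Real.pi : ℂ) * I * (a : ℂ) * (b : ℂ))
        * (-I * τ) ^ (3 / 2 : ℂ) * thetaG b (-a) τ := by
  unfold thetaG
  exact thetaG_S_transform_aux a b τ hτ
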